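/- arXiv:2404.17321 — 3 statements merged into one kernel-verified Lean document; each statement's English description precedes it below -/
import Mathlib

section
/- Let l > 0, m > 0, τ > 0 be real numbers, let α be a real number with 0 < α ≤ 1, and let v > 0 be real satisfying l²·v^{2α} + τ²·v^{4α} + 2·l·τ·v^{3α}·cos(απ/2) = m². Then there exists a real number τ* > 0 such that (τ/l)·(iv)^{2α} + (iv)^α + (m/l)·exp(−i·v·τ*) = 0 (principal-branch complex powers). -/
open Complex

lemma cpow_I_mul_pos (v c : ℝ) (hv : 0 < v) :
    (Complex.I * (v : ℂ)) ^ ((c : ℝ) : ℂ) =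
      ((v ^ c : ℝ) : ℂ) * Complex.exp (((c * Real.pi / 2 : ℝ) : ℂ) * Complex.I) := by
  have hz : Complex.I * (v : ℂ) ≠ 0 := by
    simp [Complex.ext_iff, hv.ne']
  have habs : ‖Complex.I * (v : ℂ)‖ = v := by
    simp [abs_of_pos hv]
  have harg : (Complex.I * (v : ℂ)).arg = Real.pi / 2 := by
    rw [mul_comm, Complex.arg_real_mul _ hv, Complex.arg_I]
  rw [Complex.cpow_def_of_ne_zero hz]
  have hlog : Complex.log (Complex.I * (v : ℂ)) =
      ((Real.log v : ℝ) : ℂ) + ((Real.pi / 2 : ℝ) : ℂ) * Complex.I := by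
    simp [Complex.log, habs, harg]
  rw [hlog]
  rw [Real.rpow_def_of_pos hv]
  rw [show (((Real.log v : ℝ) : ℂ) + ((Real.pi / 2 : ℝ) : ℂ) * Complex.I) * ((c : ℝ) : ℂ)
      = ((Real.log v * c : ℝ) : ℂ) + ((c * Real.pi / 2 : ℝ) : ℂ) * Complex.I by
    push_cast; ring]
  rw [Complex.exp_add, Complex.ofReal_exp]

/-- If `v > 0` satisfies equation (4.7), then there exists a critical delay `τ* > 0`
such that `iv` is a root of the characteristic equation with the delay in the
exponential replaced by `τ*`:
`(τ/l)(iv)^{2α} + (iv)^α + (m/l)e^{−ivτ*} = 0`. -/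
theorem exists_critical_delay
    (l m τ α v : ℝ) (hl : 0 < l) (hm : 0 < m) (hτ : 0 < τ)
    (hα0 : 0 < α) (hα1 : α ≤ 1) (hv : 0 < v)
    (h47 : l ^ 2 * v ^ (2 * α) + τ ^ 2 * v ^ (4 * α)
      + 2 * l * τ * v ^ (3 * α) * Real.cos (α * Real.pi / 2) = m ^ 2) :
    ∃ τs : ℝ, 0 < τs ∧
      ((τ / l : ℝ) : ℂ) * (Complex.I * (v : ℂ)) ^ ((2 * α : ℝ) : ℂ)
        + (Complex.I * (v : ℂ)) ^ ((α : ℝ) : ℂ)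
        + ((m / l : ℝ) : ℂ) * Complex.exp (-(Complex.I * (v : ℂ) * (τs : ℂ))) = 0 := by
  set a : ℝ := v ^ α with ha
  have ha0 : 0 < a := Real.rpow_pos_of_pos hv α
  -- rpow identities
  have h2 : v ^ (2 * α) = a ^ 2 := by
    rw [show (2 : ℝ) * α = α * 2 by ring, Real.rpow_mul hv.le, ha,
      show ((2 : ℝ) : ℝ) = ((2 : ℕ) : ℝ) by norm_num, Real.rpow_natCast]
  have h3 : v ^ (3 * α) = a ^ 3 := by
    rw [show (3 : ℝ) * α = α * 3 by ring, Real.rpow_mul hv.le, ha,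
      show ((3 : ℝ) : ℝ) = ((3 : ℕ) : ℝ) by norm_num, Real.rpow_natCast]
  have h4 : v ^ (4 * α) = a ^ 4 := by
    rw [show (4 : ℝ) * α = α * 4 by ring, Real.rpow_mul hv.le, ha,
      show ((4 : ℝ) : ℝ) = ((4 : ℕ) : ℝ) by norm_num, Real.rpow_natCast]
  set c : ℝ := Real.cos (α * Real.pi / 2) with hc
  set s : ℝ := Real.sin (α * Real.pi / 2) with hs
  have hsc : s ^ 2 + c ^ 2 = 1 := Real.sin_sq_add_cos_sq _
  -- the sum of the two cpow terms
  set z : ℂ := ((τ / l : ℝ) : ℂ) * (Complex.I * (v : ℂ)) ^ ((2 * α : ℝ) : ℂ)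
      + (Complex.I * (v : ℂ)) ^ ((α : ℝ) : ℂ) with hzdef
  have hz : z = (((τ / l * a ^ 2 * Real.cos (2 * α * Real.pi / 2) + a * c : ℝ)) : ℂ)
      + (((τ / l * a ^ 2 * Real.sin (2 * α * Real.pi / 2) + a * s : ℝ)) : ℂ) * Complex.I := by
    rw [hzdef, cpow_I_mul_pos v (2 * α) hv, cpow_I_mul_pos v α hv, h2, ← ha, hc, hs,
      Complex.exp_mul_I, Complex.exp_mul_I]
    push_cast
    try ring
  have hcos2 : Real.cos (2 * α * Real.pi / 2) = 2 * c ^ 2 - 1 := by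
    rw [show 2 * α * Real.pi / 2 = 2 * (α * Real.pi / 2) by ring, Real.cos_two_mul]
  have hsin2 : Real.sin (2 * α * Real.pi / 2) = 2 * s * c := by
    rw [show 2 * α * Real.pi / 2 = 2 * (α * Real.pi / 2) by ring, Real.sin_two_mul]
    try ring
  have hl' : (l : ℝ) ≠ 0 := hl.ne'
  have hm' : (m : ℝ) ≠ 0 := hm.ne'
  -- |z| = m / l
  have hnsq : Complex.normSq z = (m / l) ^ 2 := by
    rw [hz, Complex.normSq_add_mul_I, hcos2, hsin2]
    rw [h2, h3, h4] at h47
    field_simp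
    linear_combination h47 + (4 * τ ^ 2 * a ^ 4 * c ^ 2 + a ^ 2 * l ^ 2
      + 4 * τ * a ^ 3 * l * c) * hsc
  have habsz : ‖z‖ = m / l := by
    have h1 : ‖z‖ ^ 2 = (m / l) ^ 2 := by rw [Complex.sq_norm]; exact hnsq
    have := Real.sqrt_sq (norm_nonneg z)
    have h2' := Real.sqrt_sq (le_of_lt (div_pos hm hl))
    rw [← this, h1, h2']
  -- w has modulus 1
  set w : ℂ := -(((l / m : ℝ) : ℂ) * z) with hw
  have hexpw : Complex.exp ((w.arg : ℂ) * Complex.I) = w := by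
    have h1 : ‖w‖ = 1 := by
      rw [hw]
      rw [norm_neg, norm_mul, habsz, Complex.norm_real, Real.norm_eq_abs,
        abs_of_pos (div_pos hl hm)]
      field_simp
    have := Complex.norm_mul_exp_arg_mul_I w
    rw [h1] at this
    simpa using this
  refine ⟨(2 * Real.pi - w.arg) / v, ?_, ?_⟩
  · apply div_pos _ hv
    have h1 : w.arg ≤ Real.pi := Complex.arg_le_pi w
    have h2' : 0 < Real.pi := Real.pi_pos
    linarith
  · have hvτ : (v : ℝ) * ((2 * Real.pi - w.arg) / v) = 2 * Real.pi - w.arg := by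
      field_simp
    have hexp : Complex.exp (-(Complex.I * (v : ℂ) * (((2 * Real.pi - w.arg) / v : ℝ) : ℂ))) = w := by
      have harg : -(Complex.I * (v : ℂ) * (((2 * Real.pi - w.arg) / v : ℝ) : ℂ))
          = (w.arg : ℂ) * Complex.I - 2 * (Real.pi : ℂ) * Complex.I := by
        have : ((v : ℝ) : ℂ) * (((2 * Real.pi - w.arg) / v : ℝ) : ℂ)
            = ((2 * Real.pi - w.arg : ℝ) : ℂ) := by
          rw [← Complex.ofReal_mul, hvτ]
        push_cast at this ⊢
        rw [show -(Complex.I * (v : ℂ) * ((2 * (Real.pi : ℂ) - (w.arg : ℂ)) / (v : ℂ)))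
            = -(Complex.I * ((v : ℂ) * ((2 * (Real.pi : ℂ) - (w.arg : ℂ)) / (v : ℂ)))) by ring,
          this]
        ring
      rw [harg, Complex.exp_sub, Complex.exp_two_pi_mul_I, hexpw, div_one]
    rw [hexp, hw]
    have : ((m / l : ℝ) : ℂ) * ((l / m : ℝ) : ℂ) = 1 := by
      rw [← Complex.ofReal_mul]
      field_simp
      simp
    calc z + ((m / l : ℝ) : ℂ) * -(((l / m : ℝ) : ℂ) * z)
        = z - (((m / l : ℝ) : ℂ) * ((l / m : ℝ) : ℂ)) * z := by ring
      _ = 0 := by rw [this]; ring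
end

section
/- Let l > 0, m > 0, τ > 0 be real numbers and let α be a real number with 0 < α ≤ 1. Then there exists at most one real v > 0 such that iv is a root of the characteristic equation (τ/l)·(iv)^{2α} + (iv)^α + (m/l)·exp(−i·v·τ) = 0 (principal-branch complex powers). -/
open Complex

lemma cpow_I_mul (v c : ℝ) (hv : 0 < v) :
    (Complex.I * (v : ℂ)) ^ ((c : ℝ) : ℂ)
      = ((v ^ c : ℝ) : ℂ) * Complex.exp (((c * (Real.pi / 2) : ℝ) : ℂ) * Complex.I) := by
  have hz : Complex.I * (v : ℂ) ≠ 0 := by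
    simp [Complex.ext_iff, hv.ne']
  have harg : (Complex.I * (v : ℂ)).arg = Real.pi / 2 := by
    rw [Complex.arg_eq_pi_div_two_iff]
    constructor <;> simp [hv]
  have habs : ‖Complex.I * (v : ℂ)‖ = v := by
    simp [abs_of_pos hv]
  have hlog : Complex.log (Complex.I * (v : ℂ))
      = (Real.log v : ℂ) + ((Real.pi / 2 : ℝ) : ℂ) * Complex.I := by
    rw [Complex.log, habs, harg]
  rw [Complex.cpow_def_of_ne_zero hz, hlog]
  rw [Real.rpow_def_of_pos hv]
  rw [show ((Real.log v : ℂ) + ((Real.pi / 2 : ℝ) : ℂ) * Complex.I) * ((c : ℝ) : ℂ)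
      = ((Real.log v * c : ℝ) : ℂ) + ((c * (Real.pi / 2) : ℝ) : ℂ) * Complex.I by
    push_cast; ring]
  rw [Complex.exp_add, Complex.ofReal_exp]

lemma modulus_eq (l m τ α : ℝ) (hl : 0 < l) (hm : 0 < m) (hτ : 0 < τ)
    (v : ℝ) (hv : 0 < v)
    (heq : ((τ / l : ℝ) : ℂ) * (Complex.I * (v : ℂ)) ^ ((2 * α : ℝ) : ℂ)
        + (Complex.I * (v : ℂ)) ^ ((α : ℝ) : ℂ)
        + ((m / l : ℝ) : ℂ) * Complex.exp (-(Complex.I * (v : ℂ) * (τ : ℂ))) = 0) :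
    ((τ / l) * v ^ (2 * α)) ^ 2 + (v ^ α) ^ 2
      + 2 * ((τ / l) * v ^ (2 * α)) * v ^ α * Real.cos (α * (Real.pi / 2))
      = (m / l) ^ 2 := by
  rw [cpow_I_mul v (2 * α) hv, cpow_I_mul v α hv] at heq
  have hA : ((τ / l : ℝ) : ℂ) * (((v ^ (2 * α) : ℝ) : ℂ)
        * Complex.exp (((2 * α * (Real.pi / 2) : ℝ) : ℂ) * Complex.I))
      + ((v ^ α : ℝ) : ℂ) * Complex.exp (((α * (Real.pi / 2) : ℝ) : ℂ) * Complex.I)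
      = -(((m / l : ℝ) : ℂ) * Complex.exp (-(Complex.I * (v : ℂ) * (τ : ℂ)))) := by
    linear_combination heq
  have hfac : ((τ / l : ℝ) : ℂ) * (((v ^ (2 * α) : ℝ) : ℂ)
        * Complex.exp (((2 * α * (Real.pi / 2) : ℝ) : ℂ) * Complex.I))
      + ((v ^ α : ℝ) : ℂ) * Complex.exp (((α * (Real.pi / 2) : ℝ) : ℂ) * Complex.I)
      = Complex.exp (((α * (Real.pi / 2) : ℝ) : ℂ) * Complex.I)
        * (((τ / l : ℝ) : ℂ) * ((v ^ (2 * α) : ℝ) : ℂ)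
            * Complex.exp (((α * (Real.pi / 2) : ℝ) : ℂ) * Complex.I)
          + ((v ^ α : ℝ) : ℂ)) := by
    rw [show ((2 * α * (Real.pi / 2) : ℝ) : ℂ) * Complex.I
        = ((α * (Real.pi / 2) : ℝ) : ℂ) * Complex.I
          + ((α * (Real.pi / 2) : ℝ) : ℂ) * Complex.I by push_cast; ring]
    rw [Complex.exp_add]; ring
  have habs : ‖((τ / l : ℝ) : ℂ) * ((v ^ (2 * α) : ℝ) : ℂ)
        * Complex.exp (((α * (Real.pi / 2) : ℝ) : ℂ) * Complex.I)
      + ((v ^ α : ℝ) : ℂ)‖ = m / l := by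
    have h1 := congrArg (‖·‖) (hfac.symm.trans hA)
    simpa [Complex.norm_exp, abs_of_pos hm, abs_of_pos hl, abs_of_pos hτ,
      abs_of_pos (div_pos hm hl)] using h1
  have hsq := congrArg (· ^ 2) habs
  simp only [Complex.sq_norm] at hsq
  set θ : ℝ := α * (Real.pi / 2) with hθ
  rw [show ((τ / l : ℝ) : ℂ) * ((v ^ (2 * α) : ℝ) : ℂ)
        * Complex.exp ((θ : ℂ) * Complex.I) + ((v ^ α : ℝ) : ℂ)
      = (((τ / l) * v ^ (2 * α) * Real.cos θ + v ^ α : ℝ) : ℂ)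
        + (((τ / l) * v ^ (2 * α) * Real.sin θ : ℝ) : ℂ) * Complex.I by
    rw [Complex.exp_mul_I]; push_cast; ring] at hsq
  rw [Complex.normSq_add_mul_I] at hsq
  have hpyth := Real.sin_sq_add_cos_sq θ
  nlinarith [hsq, hpyth]

/-- For positive parameters `l, m, τ` and `0 < α ≤ 1`, there is at most one `v > 0`
such that `iv` is a root of the characteristic equation
`(τ/l)λ^{2α} + λ^α + (m/l)e^{−λτ} = 0` (principal-branch complex powers). -/
theorem at_most_one_imaginary_crossing
    (l m τ α : ℝ) (hl : 0 < l) (hm : 0 < m) (hτ : 0 < τ)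
    (hα0 : 0 < α) (hα1 : α ≤ 1) :
    ∀ v₁ v₂ : ℝ, 0 < v₁ → 0 < v₂ →
      ((τ / l : ℝ) : ℂ) * (Complex.I * (v₁ : ℂ)) ^ ((2 * α : ℝ) : ℂ)
        + (Complex.I * (v₁ : ℂ)) ^ ((α : ℝ) : ℂ)
        + ((m / l : ℝ) : ℂ) * Complex.exp (-(Complex.I * (v₁ : ℂ) * (τ : ℂ))) = 0 →
      ((τ / l : ℝ) : ℂ) * (Complex.I * (v₂ : ℂ)) ^ ((2 * α : ℝ) : ℂ)
        + (Complex.I * (v₂ : ℂ)) ^ ((α : ℝ) : ℂ)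
        + ((m / l : ℝ) : ℂ) * Complex.exp (-(Complex.I * (v₂ : ℂ) * (τ : ℂ))) = 0 →
      v₁ = v₂ := by
  intro v₁ v₂ hv₁ hv₂ h₁ h₂
  have e₁ := modulus_eq l m τ α hl hm hτ v₁ hv₁ h₁
  have e₂ := modulus_eq l m τ α hl hm hτ v₂ hv₂ h₂
  have hcos : 0 ≤ Real.cos (α * (Real.pi / 2)) := by
    apply Real.cos_nonneg_of_mem_Icc
    constructor
    · nlinarith [Real.pi_pos]
    · nlinarith [Real.pi_pos]
  have hτl : 0 < τ / l := div_pos hτ hl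
  have key : ∀ a b : ℝ, 0 < a → 0 < b → a < b →
      ((τ / l) * a ^ (2 * α)) ^ 2 + (a ^ α) ^ 2
        + 2 * ((τ / l) * a ^ (2 * α)) * a ^ α * Real.cos (α * (Real.pi / 2)) = (m / l) ^ 2 →
      ((τ / l) * b ^ (2 * α)) ^ 2 + (b ^ α) ^ 2
        + 2 * ((τ / l) * b ^ (2 * α)) * b ^ α * Real.cos (α * (Real.pi / 2)) = (m / l) ^ 2 →
      False := by
    intro a b ha hb hab ea eb
    have hba : a ^ (2 * α) < b ^ (2 * α) := Real.rpow_lt_rpow ha.le hab (by linarith)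
    have hbc : a ^ α < b ^ α := Real.rpow_lt_rpow ha.le hab hα0
    have hpa2 : 0 < a ^ (2 * α) := Real.rpow_pos_of_pos ha _
    have hpa1 : 0 < a ^ α := Real.rpow_pos_of_pos ha _
    have h1 : ((τ / l) * a ^ (2 * α)) ^ 2 < ((τ / l) * b ^ (2 * α)) ^ 2 := by
      apply pow_lt_pow_left₀ _ (by positivity) (by norm_num)
      exact mul_lt_mul_of_pos_left hba hτl
    have h2 : (a ^ α) ^ 2 < (b ^ α) ^ 2 :=
      pow_lt_pow_left₀ hbc hpa1.le (by norm_num)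
    have h3 : 2 * ((τ / l) * a ^ (2 * α)) * a ^ α * Real.cos (α * (Real.pi / 2))
        ≤ 2 * ((τ / l) * b ^ (2 * α)) * b ^ α * Real.cos (α * (Real.pi / 2)) := by
      apply mul_le_mul_of_nonneg_right _ hcos
      apply mul_le_mul _ hbc.le hpa1.le (by positivity)
      have := mul_lt_mul_of_pos_left hba hτl
      linarith
    linarith
  rcases lt_trichotomy v₁ v₂ with h | h | h
  · exact (key v₁ v₂ hv₁ hv₂ h e₁ e₂).elim
  · exact h
  · exact (key v₂ v₁ hv₂ hv₁ h e₂ e₁).elim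
end

section
/- Let l > 0 and m > 0 be real numbers, let τ ≥ 0 be real, and let α be a real number with 0 < α ≤ 1. Then there exists a real number λ > 0 such that (τ/l)·λ^{2α} + λ^{α} = (m/l)·exp(−λ·τ), where λ^β denotes the real power. Consequently the characteristic equation (τ/l)λ^{2α} + λ^α − (m/l)e^{−λτ} = 0 of the linearization near the equilibria x* = (2n+1)π always has a positive real root. -/
/-- For any delay `τ ≥ 0`, the characteristic equation
`(τ/l)λ^{2α} + λ^α − (m/l)e^{−λτ} = 0` of the linearization near the equilibria
`x* = (2n+1)π` has a positive real root (real powers). -/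
theorem exists_positive_real_root_odd_equilibria
    (l m τ α : ℝ) (hl : 0 < l) (hm : 0 < m) (hτ : 0 ≤ τ)
    (hα0 : 0 < α) (hα1 : α ≤ 1) :
    ∃ x : ℝ, 0 < x ∧
      τ / l * x ^ (2 * α) + x ^ α = m / l * Real.exp (-(x * τ)) := by
  set g : ℝ → ℝ := fun x => τ / l * x ^ (2 * α) + x ^ α - m / l * Real.exp (-(x * τ))
    with hg
  have hcont : Continuous g := by
    have h1 : Continuous fun x : ℝ => x ^ (2 * α) := by
      apply continuous_iff_continuousAt.2
      intro x
      exact Real.continuousAt_rpow_const x (2 * α) (Or.inr (by positivity))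
    have h2 : Continuous fun x : ℝ => x ^ α := by
      apply continuous_iff_continuousAt.2
      intro x
      exact Real.continuousAt_rpow_const x α (Or.inr hα0.le)
    fun_prop
  set b : ℝ := max 1 ((m / l) ^ (1 / α)) with hb
  have hb1 : (1 : ℝ) ≤ b := le_max_left _ _
  have hb0 : 0 ≤ b := le_trans zero_le_one hb1
  have hgb : 0 ≤ g b := by
    have hml : 0 < m / l := div_pos hm hl
    have h1 : m / l ≤ b ^ α := by
      have : (m / l) ^ (1 / α) ≤ b := le_max_right _ _
      calc m / l = ((m / l) ^ (1 / α)) ^ α := by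
            rw [← Real.rpow_mul hml.le, one_div, inv_mul_cancel₀ hα0.ne', Real.rpow_one]
          _ ≤ b ^ α := Real.rpow_le_rpow (Real.rpow_nonneg hml.le _) this hα0.le
    have h2 : m / l * Real.exp (-(b * τ)) ≤ m / l := by
      nlinarith [Real.exp_le_one_iff.2 (neg_nonpos.2 (by positivity) : -(b * τ) ≤ 0), hml]
    have h3 : 0 ≤ τ / l * b ^ (2 * α) := by positivity
    simp only [hg]
    linarith
  have hg0 : g 0 < 0 := by
    have : (0 : ℝ) ^ (2 * α) = 0 := Real.zero_rpow (by positivity)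
    have h2 : (0 : ℝ) ^ α = 0 := Real.zero_rpow hα0.ne'
    simp [hg, this, h2]
    positivity
  have := intermediate_value_Icc hb0 hcont.continuousOn
  have hmem : (0 : ℝ) ∈ Set.Icc (g 0) (g b) := ⟨hg0.le, hgb⟩
  obtain ⟨c, hc, hgc⟩ := this hmem
  refine ⟨c, ?_, ?_⟩
  · rcases hc.1.lt_or_eq with h | h
    · exact h
    · exact absurd hgc (by rw [← h]; exact hg0.ne)
  · have : τ / l * c ^ (2 * α) + c ^ α - m / l * Real.exp (-(c * τ)) = 0 := hgc
    linarith
end
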